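/- Properties of the extrapolated potential, part (i): assume the kernel matrix K = (exp(−c_{ij}/2))_{i,j} is positive definite. For every f ∈ ℝ^d, f_i ≤ f^E_i for all i ∈ [d], and f_i = f^E_i for every i in the support of g-softmax(f) (i.e. every i with (g-softmax(f))_i > 0). -/

import Mathlib

open Finset Real Filter

noncomputable section

/-- The probability simplex in `ℝ^d`. -/
def simplexS (d : ℕ) : Set (Fin d → ℝ) := stdSimplex ℝ (Fin d)


open scoped Classical

/-- `Φ_C(α,f) = Σ_{i,j} α_i α_j exp(-(f_i + f_j + c_{ij})/2)`. -/
def Phi {d : ℕ} (C : Matrix (Fin d) (Fin d) ℝ) (α f : Fin d → ℝ) : ℝ :=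
  ∑ i, ∑ j, α i * α j * Real.exp (-(f i + f j + C i j) / 2)

/-- The geometric log-sum-exp `Ω_C^*(f) = -log min_{α ∈ △^d} Φ_C(α, f)`. -/
def OmegaStar {d : ℕ} (C : Matrix (Fin d) (Fin d) ℝ) (f : Fin d → ℝ) : ℝ :=
  -Real.log (sInf ((fun α => Phi C α f) '' simplexS d))

/-- The geometric softmax: the (unique, when the kernel is positive definite) minimizer of
`Φ_C(·, f)` over the simplex. -/
def gsoftmax {d : ℕ} (C : Matrix (Fin d) (Fin d) ℝ) (f : Fin d → ℝ) : Fin d → ℝ :=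
  if h : ∃ α ∈ simplexS d, IsMinOn (fun β => Phi C β f) (simplexS d) α
  then h.choose else fun _ => 0

/-- The soft C-transform `T(f,α)_i = -2 log Σ_j α_j exp((f_j - c_{ij})/2)`. -/
def Tsoft {d : ℕ} (C : Matrix (Fin d) (Fin d) ℝ) (f α : Fin d → ℝ) : Fin d → ℝ :=
  fun i => -2 * Real.log (∑ j, α j * Real.exp ((f j - C i j) / 2))

/-- `f` is the symmetric Sinkhorn potential of `α`: `-f = T(-f, α)`. -/
def IsSinkhornPotential {d : ℕ} (C : Matrix (Fin d) (Fin d) ℝ) (α f : Fin d → ℝ) : Prop :=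
  -f = Tsoft C (-f) α

/-- The symmetric Sinkhorn potential `∇Ω(α)`: the (unique, when the kernel is positive
definite) `f` with `-f = T(-f, α)`. -/
def gradOmega {d : ℕ} (C : Matrix (Fin d) (Fin d) ℝ) (α : Fin d → ℝ) : Fin d → ℝ :=
  if h : ∃ f : Fin d → ℝ, IsSinkhornPotential C α f then h.choose else fun _ => 0

/-- The extrapolation `f^E = -T(-(f - Ω_C^*(f)·1), g-softmax(f)) + Ω_C^*(f)·1`. -/
def extrap {d : ℕ} (C : Matrix (Fin d) (Fin d) ℝ) (f : Fin d → ℝ) : Fin d → ℝ :=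
  fun i => -(Tsoft C (fun j => -(f j - OmegaStar C f)) (gsoftmax C f) i) + OmegaStar C f

/-- The kernel matrix `K = (exp(-c_{ij}/2))_{ij}`. -/
def kernelK {d : ℕ} (C : Matrix (Fin d) (Fin d) ℝ) : Matrix (Fin d) (Fin d) ℝ :=
  Matrix.of fun i j => Real.exp (-(C i j) / 2)


section AuxExtrap
open Finset Real

/-- Quadratic minimality: if `t*b + t^2*c ≥ 0` for all `t ∈ (0,1]`, then `b ≥ 0`. -/
lemma quad_nonneg_aux {b c : ℝ} (h : ∀ t : ℝ, 0 < t → t ≤ 1 → 0 ≤ t * b + t^2 * c) :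
    0 ≤ b := by
  by_contra hb
  push_neg at hb
  have hcpos : (0:ℝ) < |c| + 1 := by positivity
  set t := min 1 (-b / (|c| + 1)) with ht
  have ht0 : 0 < t := lt_min one_pos (div_pos (neg_pos.mpr hb) hcpos)
  have ht1 : t ≤ 1 := min_le_left _ _
  have htle : t ≤ -b / (|c| + 1) := min_le_right _ _
  have h1 := h t ht0 ht1
  have hct : c * t ≤ |c| * t := mul_le_mul_of_nonneg_right (le_abs_self c) ht0.le
  have h2 : |c| * t ≤ |c| * (-b / (|c| + 1)) :=
    mul_le_mul_of_nonneg_left htle (abs_nonneg c)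
  have h3 : |c| * (-b / (|c| + 1)) = -b * (|c| / (|c|+1)) := by ring
  have h4 : |c| / (|c|+1) < 1 := by rw [div_lt_one hcpos]; linarith
  nlinarith [sq_nonneg t, mul_pos ht0 (neg_pos.mpr hb)]

end AuxExtrap

/-- Properties of the extrapolated potential, part (i): `f ≤ f^E` everywhere, with
equality on the support of `g-softmax(f)`. -/
theorem extrap_ge_and_eq_on_support (d : ℕ) (hd : 1 ≤ d)
    (C : Matrix (Fin d) (Fin d) ℝ) (hCsym : C.IsSymm) (hCdiag : ∀ i, C i i = 0)
    (hK : (kernelK C).PosDef) (f : Fin d → ℝ) :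
    (∀ i, f i ≤ extrap C f i) ∧
    (∀ i, 0 < gsoftmax C f i → f i = extrap C f i) := by
  classical
  -- notation
  set E : Fin d → Fin d → ℝ := fun i j => Real.exp (-(f i + f j + C i j) / 2) with hEdef
  have hEpos : ∀ i j, 0 < E i j := fun i j => Real.exp_pos _
  have hEsym : ∀ i j, E i j = E j i := by
    intro i j
    simp only [hEdef]
    rw [show C i j = C j i from hCsym.apply j i]
    ring_nf
  have hPhi : ∀ α : Fin d → ℝ, Phi C α f = ∑ i, ∑ j, α i * α j * E i j := fun α => rfl
  -- existence of a minimizer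
  have hne : (simplexS d).Nonempty := by
    refine ⟨fun _ => 1/d, fun i => by positivity, ?_⟩
    have hd0 : (d:ℝ) ≠ 0 := by positivity
    simp [Finset.sum_const, Finset.card_univ]
    field_simp
  have hcont : Continuous fun α : Fin d → ℝ => Phi C α f := by
    unfold Phi; fun_prop
  obtain ⟨α0, hα0S, hα0min⟩ :=
    (isCompact_stdSimplex ℝ (Fin d)).exists_isMinOn hne hcont.continuousOn
  have hex : ∃ α ∈ simplexS d, IsMinOn (fun β => Phi C β f) (simplexS d) α :=
    ⟨α0, hα0S, hα0min⟩
  have hgdef : gsoftmax C f = hex.choose := by rw [gsoftmax, dif_pos hex]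
  obtain ⟨hαS, hαmin⟩ : gsoftmax C f ∈ simplexS d ∧
      IsMinOn (fun β => Phi C β f) (simplexS d) (gsoftmax C f) := by
    rw [hgdef]; exact ⟨hex.choose_spec.1, hex.choose_spec.2⟩
  set α : Fin d → ℝ := gsoftmax C f with hα
  have hαnn : ∀ i, 0 ≤ α i := hαS.1
  have hαsum : ∑ i, α i = 1 := hαS.2
  set P : ℝ := Phi C α f with hP
  have hmin : ∀ β ∈ simplexS d, P ≤ Phi C β f := fun β hβ => hαmin hβ
  -- some index with positive mass
  obtain ⟨k, hk⟩ : ∃ k, 0 < α k := by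
    by_contra hcon
    push_neg at hcon
    have : ∑ i, α i ≤ 0 := Finset.sum_nonpos fun i _ => hcon i
    linarith
  -- positivity of P
  have hPpos : 0 < P := by
    have h1 : α k * α k * E k k ≤ ∑ j, α k * α j * E k j :=
      Finset.single_le_sum
        (fun j _ => mul_nonneg (mul_nonneg (hαnn k) (hαnn j)) (hEpos k j).le)
        (Finset.mem_univ k)
    have h2 : ∑ j, α k * α j * E k j ≤ ∑ i, ∑ j, α i * α j * E i j :=
      Finset.single_le_sum (fun i _ => Finset.sum_nonneg fun j _ =>
        mul_nonneg (mul_nonneg (hαnn i) (hαnn j)) (hEpos i j).le) (Finset.mem_univ k)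
    have h3 : 0 < α k * α k * E k k := mul_pos (mul_pos hk hk) (hEpos k k)
    calc 0 < α k * α k * E k k := h3
      _ ≤ _ := h1.trans h2
  -- the gradient-type quantity
  set G : Fin d → ℝ := fun i => ∑ j, α j * E i j with hGdef
  have hGpos : ∀ i, 0 < G i := by
    intro i
    have h1 : α k * E i k ≤ G i :=
      Finset.single_le_sum (fun j _ => mul_nonneg (hαnn j) (hEpos i j).le) (Finset.mem_univ k)
    have : 0 < α k * E i k := mul_pos hk (hEpos i k)
    linarith
  -- key first-order condition: G i ≥ P for all i
  have hGge : ∀ i, P ≤ G i := by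
    intro i
    set v : Fin d → ℝ := fun j => (if j = i then (1:ℝ) else 0) - α j with hv
    set Sc : ℝ := ∑ j, ∑ l, v j * v l * E j l with hSc
    have key : ∀ t : ℝ, 0 < t → t ≤ 1 →
        0 ≤ t * (2 * (G i - P)) + t^2 * Sc := by
      intro t ht0 ht1
      -- β t in simplex
      have hβS : (fun j => α j + t * v j) ∈ simplexS d := by
        constructor
        · intro j
          show 0 ≤ α j + t * v j
          have : α j + t * v j = (1 - t) * α j + t * (if j = i then (1:ℝ) else 0) := by
            simp only [hv]; ring
          rw [this]
          have : (0:ℝ) ≤ (if j = i then (1:ℝ) else 0) := by positivity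
          have h1 : 0 ≤ (1 - t) * α j := mul_nonneg (by linarith) (hαnn j)
          have h2 : 0 ≤ t * (if j = i then (1:ℝ) else 0) := mul_nonneg ht0.le this
          linarith
        · have hvsum : ∑ j, v j = 0 := by
            simp only [hv, Finset.sum_sub_distrib, hαsum]
            rw [Finset.sum_ite_eq' Finset.univ i (fun _ => (1:ℝ))]
            simp
          show (∑ j, (α j + t * v j)) = 1
          rw [Finset.sum_add_distrib, hαsum, ← Finset.mul_sum, hvsum]
          ring
      have hmin' := hmin _ hβS
      -- expansion of Phi along the segment
      have hS1 : ∑ j, ∑ l, α j * v l * E j l = G i - P := by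
        have : ∀ j, ∑ l, α j * v l * E j l = α j * E j i - α j * (∑ l, α l * E j l) := by
          intro j
          have hterm : ∀ l, α j * v l * E j l
              = (if l = i then α j * E j l else 0) - α j * (α l * E j l) := by
            intro l
            simp only [hv]
            rcases eq_or_ne l i with h | h <;> simp [h] <;> ring
          simp only [hterm]
          rw [Finset.sum_sub_distrib, Finset.sum_ite_eq' Finset.univ i (fun l => α j * E j l),
            ← Finset.mul_sum]
          simp
        rw [Finset.sum_congr rfl fun j _ => this j, Finset.sum_sub_distrib]
        congr 1
        · simp only [hGdef]
          exact Finset.sum_congr rfl fun j _ => by rw [hEsym j i]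
        · rw [hP, hPhi]
          exact Finset.sum_congr rfl fun j _ => by
            rw [Finset.mul_sum]
            exact Finset.sum_congr rfl fun l _ => by ring
      have hS2 : ∑ j, ∑ l, v j * α l * E j l = G i - P := by
        rw [Finset.sum_comm]
        rw [← hS1]
        exact Finset.sum_congr rfl fun l _ => Finset.sum_congr rfl fun j _ => by
          rw [hEsym j l]; ring
      have hexp : Phi C (fun j => α j + t * v j) f
          = P + t * (2 * (G i - P)) + t^2 * Sc := by
        rw [hPhi]
        have : ∀ (j l : Fin d), (α j + t * v j) * (α l + t * v l) * E j l
            = α j * α l * E j l + (t * (α j * v l * E j l)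
              + (t * (v j * α l * E j l) + t^2 * (v j * v l * E j l))) := by
          intro j l; ring
        simp only [this, Finset.sum_add_distrib, ← Finset.mul_sum]
        rw [hS1, hS2]
        rw [hP, hPhi, hSc]
        ring
      rw [hexp] at hmin'
      linarith
    have := quad_nonneg_aux key
    linarith
  -- equality on the support
  have hsumG : ∑ i, α i * G i = P := by
    rw [hP, hPhi]
    refine Finset.sum_congr rfl fun i _ => ?_
    rw [hGdef, Finset.mul_sum]
    exact Finset.sum_congr rfl fun j _ => by ring
  have hGeq : ∀ i, 0 < α i → G i = P := by
    intro i hi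
    by_contra hne'
    have hlt : P < G i := lt_of_le_of_ne (hGge i) (Ne.symm hne')
    have hterm : ∀ j ∈ Finset.univ, α j * P ≤ α j * G j :=
      fun j _ => mul_le_mul_of_nonneg_left (hGge j) (hαnn j)
    have hstrict : ∑ j, α j * P < ∑ j, α j * G j := by
      refine Finset.sum_lt_sum hterm ⟨i, Finset.mem_univ i, ?_⟩
      exact mul_lt_mul_of_pos_left hlt hi
    rw [hsumG, ← Finset.sum_mul, hαsum, one_mul] at hstrict
    exact lt_irrefl _ hstrict
  -- identify OmegaStar
  have hsInf : sInf ((fun β => Phi C β f) '' simplexS d) = P := by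
    refine IsLeast.csInf_eq ⟨⟨α, hαS, rfl⟩, ?_⟩
    rintro _ ⟨β, hβ, rfl⟩
    exact hmin β hβ
  have hΩ : OmegaStar C f = -Real.log P := by rw [OmegaStar, hsInf]
  -- formula for extrap
  have hextr : ∀ i, extrap C f i = f i + 2 * (Real.log (G i) - Real.log P) := by
    intro i
    have hsum : (∑ j, gsoftmax C f j * Real.exp ((-(f j - OmegaStar C f) - C i j) / 2))
        = Real.exp ((OmegaStar C f + f i) / 2) * G i := by
      rw [hGdef, Finset.mul_sum]
      refine Finset.sum_congr rfl fun j _ => ?_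
      rw [← hα]
      have hEij : E i j = Real.exp (-(f i + f j + C i j) / 2) := rfl
      have harg : (-(f j - OmegaStar C f) - C i j) / 2
          = (OmegaStar C f + f i) / 2 + -(f i + f j + C i j) / 2 := by ring
      rw [harg, Real.exp_add, hEij]
      ring
    rw [extrap, Tsoft]
    rw [hsum]
    rw [Real.log_mul (Real.exp_ne_zero _) (hGpos i).ne']
    rw [Real.log_exp, hΩ]
    ring
  constructor
  · intro i
    rw [hextr i]
    have := Real.log_le_log hPpos (hGge i)
    linarith
  · intro i hi
    rw [hextr i, hGeq i hi]
    ring
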